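/- Reservoir sampling is (ε, δ)-robust against adaptive adversaries for a single set: fix R ⊆ U, 0 < ε, δ < 1, stream length n ≥ 2, and memory size k ≥ 2·ln(2/δ)/ε². Then for any adaptive adversary, with probability at least 1 - δ the final reservoir sample S of size min(n,k) satisfies |d_R(X) - d_R(S)| ≤ ε. -/

import Mathlib

open MeasureTheory
open scoped Classical

/-- The density of a set `R` in a finite sequence (list) `T`. -/
noncomputable def density {α : Type*} (T : List α) (R : Set α) : ℝ :=
  ((T.countP fun y => @decide (y ∈ R) (Classical.propDecidable _)) : ℝ) / T.length

set_option maxHeartbeats 1000000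
set_option linter.unusedSectionVars false
set_option linter.unnecessarySeqFocus false

noncomputable def phiR (v : ℝ) : ℝ := Real.exp v - 1 - v

lemma phiR_nonneg (v : ℝ) : 0 ≤ phiR v := by
  have := Real.add_one_le_exp v
  simp only [phiR]; linarith

lemma real_exp_tsum (v : ℝ) : Real.exp v = ∑' j : ℕ, v ^ j / j.factorial := by
  rw [Real.exp_eq_exp_ℝ, NormedSpace.exp_eq_tsum_div]

lemma phiR_tsum (v : ℝ) : phiR v = ∑' j : ℕ, v ^ (j + 2) / (j + 2).factorial := by
  have h0 := Real.summable_pow_div_factorial v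
  have h1 : Summable (fun j : ℕ => v ^ (j + 1) / (j + 1).factorial) :=
    (summable_nat_add_iff 1).2 h0
  have e0 := h0.tsum_eq_zero_add
  have e1 := h1.tsum_eq_zero_add
  have : Real.exp v = 1 + (v + ∑' j : ℕ, v ^ (j + 1 + 1) / (j + 1 + 1).factorial) := by
    rw [real_exp_tsum, e0, e1]; norm_num
  have h2 : (fun j : ℕ => v ^ (j + 1 + 1) / (j + 1 + 1).factorial)
      = fun j : ℕ => v ^ (j + 2) / (j + 2).factorial := by
    funext j; norm_num
  rw [h2] at this
  simp only [phiR, this]; ring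

lemma summable_phi (v : ℝ) : Summable (fun j : ℕ => v ^ (j + 2) / (j + 2).factorial) :=
  (summable_nat_add_iff 2).2 (Real.summable_pow_div_factorial v)

lemma phiR_le_scale {v b : ℝ} (hb : 0 < b) (hvb : |v| ≤ b) :
    phiR v ≤ (|v| / b) ^ 2 * phiR b := by
  rw [phiR_tsum, phiR_tsum, ← tsum_mul_left]
  refine Summable.tsum_le_tsum (fun j => ?_) (summable_phi v) ((summable_phi b).mul_left _)
  have hv0 : (0:ℝ) ≤ |v| := abs_nonneg v
  have hfac : (0:ℝ) < ((j+2).factorial : ℝ) := by positivity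
  have key : v ^ (j + 2) ≤ |v| ^ 2 * b ^ j := by
    calc v ^ (j + 2) ≤ |v ^ (j + 2)| := le_abs_self _
    _ = |v| ^ (j + 2) := by rw [abs_pow]
    _ = |v| ^ 2 * |v| ^ j := by ring
    _ ≤ |v| ^ 2 * b ^ j := by
        gcongr
  have : (|v| / b) ^ 2 * (b ^ (j + 2) / ((j+2).factorial : ℝ)) = (|v| ^ 2 * b ^ j) / ((j+2).factorial : ℝ) := by
    field_simp
    ring
  rw [this]
  gcongr

lemma two_mul_three_pow_le_factorial (j : ℕ) : 2 * 3 ^ j ≤ (j + 2).factorial := by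
  induction j with
  | zero => simp [Nat.factorial]
  | succ m ih =>
    have : (m + 3).factorial = (m + 3) * (m + 2).factorial := rfl
    calc 2 * 3 ^ (m + 1) = 3 * (2 * 3 ^ m) := by ring
    _ ≤ 3 * (m + 2).factorial := by omega
    _ ≤ (m + 3) * (m + 2).factorial := by
        have : 3 ≤ m + 3 := by omega
        exact Nat.mul_le_mul_right _ this
    _ = (m + 3).factorial := this.symm

lemma phiR_le_quad {u : ℝ} (h0 : 0 ≤ u) (h3 : u < 3) :
    phiR u ≤ u ^ 2 / (2 * (1 - u / 3)) := by
  have hgeo : (0:ℝ) ≤ u / 3 := by linarith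
  have hgeo2 : u / 3 < 1 := by linarith
  have hsumg : Summable (fun j : ℕ => (u ^ 2 / 2) * (u / 3) ^ j) :=
    (summable_geometric_of_lt_one hgeo hgeo2).mul_left _
  have hts : ∑' j : ℕ, (u ^ 2 / 2) * (u / 3) ^ j = (u ^ 2 / 2) * (1 - u / 3)⁻¹ := by
    rw [tsum_mul_left, tsum_geometric_of_lt_one hgeo hgeo2]
  have hmain : phiR u ≤ (u ^ 2 / 2) * (1 - u / 3)⁻¹ := by
    rw [phiR_tsum, ← hts]
    refine Summable.tsum_le_tsum (fun j => ?_) (summable_phi u) hsumg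
    have hfac : (0:ℝ) < ((j+2).factorial : ℝ) := by positivity
    have h1 : (u ^ 2 / 2) * (u / 3) ^ j = u ^ (j + 2) / (2 * 3 ^ j) := by
      rw [div_pow, pow_add]
      ring
    rw [h1]
    have h2 : (0:ℝ) < 2 * 3 ^ j := by positivity
    have h3' : (2 * 3 ^ j : ℝ) ≤ ((j+2).factorial : ℝ) := by
      exact_mod_cast two_mul_three_pow_le_factorial j
    have hu : 0 ≤ u ^ (j + 2) := by positivity
    exact div_le_div_of_nonneg_left hu h2 h3'
  have : u ^ 2 / (2 * (1 - u / 3)) = (u ^ 2 / 2) * (1 - u / 3)⁻¹ := by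
    field_simp
  linarith [hmain, this.ge]


lemma mgf_two_point (θ s q : ℝ) :
    Real.exp (-(θ * (q * s))) * (1 + q * (Real.exp (θ * s) - 1))
      ≤ Real.exp (q * phiR (θ * s)) := by
  have h1 : 1 + q * (Real.exp (θ * s) - 1) ≤ Real.exp (q * (Real.exp (θ * s) - 1)) := by
    have := Real.add_one_le_exp (q * (Real.exp (θ * s) - 1))
    linarith
  calc Real.exp (-(θ * (q * s))) * (1 + q * (Real.exp (θ * s) - 1))
      ≤ Real.exp (-(θ * (q * s))) * Real.exp (q * (Real.exp (θ * s) - 1)) := by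
        exact mul_le_mul_of_nonneg_left h1 (Real.exp_nonneg _)
    _ = Real.exp (q * phiR (θ * s)) := by
        rw [← Real.exp_add]; congr 1; simp only [phiR]; ring

lemma countP_eq_sum {α : Type*} (p : α → Bool) :
    ∀ (l : List α) (m : ℕ), l.length ≤ m →
      ((l.countP p : ℕ) : ℝ)
        = ∑ j ∈ Finset.range m, (l[j]?.elim (0:ℝ) (fun a => if p a then (1:ℝ) else 0)) := by
  intro l
  induction l with
  | nil =>
    intro m _
    simp
  | cons a l ih =>
    intro m hm
    cases m with
    | zero => simp at hm
    | succ m' =>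
      have hm' : l.length ≤ m' := by simpa using hm
      rw [Finset.sum_range_succ']
      simp only [List.getElem?_cons_succ, List.getElem?_cons_zero, List.countP_cons]
      rw [← ih m' hm']
      push_cast
      by_cases h : p a <;> simp [h]


section RS
variable {Ω : Type*} {α : Type*}

noncomputable def chiF (R : Set α) (x : ℕ → Ω → α) (i : ℕ) (ω : Ω) : ℝ :=
  if x i ω ∈ R then 1 else 0

noncomputable def AF (R : Set α) (x : ℕ → Ω → α) (t : ℕ) (ω : Ω) : ℝ :=
  ∑ i ∈ Finset.range t, chiF R x i ω

noncomputable def wF (R : Set α) (o : Option α) : ℝ :=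
  o.elim 0 (fun a => if a ∈ R then 1 else 0)

noncomputable def rF (R : Set α) (S : ℕ → Ω → List α) (j t : ℕ) (ω : Ω) : ℝ :=
  wF R ((S t ω)[j]?)

noncomputable def CF (R : Set α) (S : ℕ → Ω → List α) (k t : ℕ) (ω : Ω) : ℝ :=
  ∑ j ∈ Finset.range k, rF R S j t ω

noncomputable def ZF (R : Set α) (x : ℕ → Ω → α) (S : ℕ → Ω → List α) (k t : ℕ) (ω : Ω) : ℝ :=
  t * CF R S k t ω - k * AF R x t ω

lemma wF_mem (R : Set α) (o : Option α) : wF R o = 0 ∨ wF R o = 1 := by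
  cases o with
  | none => left; rfl
  | some a =>
    by_cases h : a ∈ R
    · right; simp [wF, h]
    · left; simp [wF, h]

lemma wF_nonneg (R : Set α) (o : Option α) : 0 ≤ wF R o := by
  rcases wF_mem R o with h | h <;> rw [h] <;> norm_num

lemma wF_le_one (R : Set α) (o : Option α) : wF R o ≤ 1 := by
  rcases wF_mem R o with h | h <;> rw [h] <;> norm_num

variable {k : ℕ} {x : ℕ → Ω → α} {b : ℕ → Ω → Bool} {u : ℕ → Ω → ℕ}
  {S : ℕ → Ω → List α}

section Struct
variable (hS0 : ∀ ω, S 0 ω = [])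
  (hSstep : ∀ i ω, S (i + 1) ω =
      if i < k then S i ω ++ [x i ω]
      else if b i ω then (S i ω).set (u i ω) (x i ω)
      else S i ω)

include hS0 hSstep in
lemma S_length : ∀ t ω, (S t ω).length = min t k := by
  intro t
  induction t with
  | zero => intro ω; simp [hS0 ω]
  | succ i ih =>
    intro ω
    rw [hSstep i ω]
    by_cases h : i < k
    · simp only [if_pos h, List.length_append, ih ω, List.length_singleton]
      omega
    · simp only [if_neg h]
      by_cases hbω : b i ω
      · simp only [if_pos hbω, List.length_set, ih ω]; omega
      · simp only [if_neg hbω, ih ω]; omega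

include hS0 hSstep in
lemma S_full : ∀ t, t ≤ k → ∀ ω, S t ω = (List.range t).map (fun i => x i ω) := by
  intro t
  induction t with
  | zero => intro _ ω; simp [hS0 ω]
  | succ i ih =>
    intro h ω
    rw [hSstep i ω, if_pos (by omega : i < k), ih (by omega) ω, List.range_succ]
    simp

include hS0 hSstep in
lemma rF_step_lt (i : ℕ) (hik : i < k) (j : ℕ) (ω : Ω) :
    rF R S j (i + 1) ω =
      if j < i then rF R S j i ω else if j = i then chiF R x i ω else 0 := by
  have hlen : (S i ω).length = i := by rw [S_length hS0 hSstep]; omega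
  simp only [rF, hSstep i ω, if_pos hik, List.getElem?_append, hlen]
  by_cases h1 : j < i
  · simp [h1]
  · simp only [if_neg h1]
    by_cases h2 : j = i
    · subst h2
      simp [wF, chiF]
    · have : j - i ≠ 0 := by omega
      rcases Nat.exists_eq_succ_of_ne_zero this with ⟨m, hm⟩
      simp [h1, h2, hm, wF]

include hS0 hSstep in
lemma rF_step_ge (i : ℕ) (hik : k ≤ i) (j : ℕ) (hjk : j < k) (ω : Ω) :
    rF R S j (i + 1) ω =
      if b i ω = true ∧ u i ω = j then chiF R x i ω else rF R S j i ω := by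
  have hlen : (S i ω).length = k := by rw [S_length hS0 hSstep]; omega
  simp only [rF, hSstep i ω, if_neg (by omega : ¬ i < k)]
  by_cases hbω : b i ω
  · simp only [if_pos hbω, List.getElem?_set, hlen]
    by_cases h2 : u i ω = j
    · simp [h2, hjk, hbω, wF, chiF]
    · simp [h2, hbω]
  · simp [hbω]

end Struct
end RS


section RS2
variable {Ω : Type*} {m0 : MeasurableSpace Ω} {α : Type*} [MeasurableSpace α]
  {R : Set α} (hR : MeasurableSet R) (ℱ : Filtration ℕ m0)
  {k : ℕ} {x : ℕ → Ω → α} {b : ℕ → Ω → Bool} {u : ℕ → Ω → ℕ}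
  {S : ℕ → Ω → List α}
  (hx : ∀ i, Measurable[ℱ i] (x i))
  (hb : ∀ i, Measurable[ℱ (i + 1)] (b i))
  (hu : ∀ i, Measurable[ℱ (i + 1)] (u i))
  (hS0 : ∀ ω, S 0 ω = [])
  (hSstep : ∀ i ω, S (i + 1) ω =
      if i < k then S i ω ++ [x i ω]
      else if b i ω then (S i ω).set (u i ω) (x i ω)
      else S i ω)

include hR hx in
lemma chiF_meas (i : ℕ) : Measurable[ℱ i] (chiF R x i) :=
  Measurable.ite ((hx i) hR) measurable_const measurable_const

include hR hx in
lemma AF_meas (t : ℕ) : Measurable[ℱ t] (AF R x t) := by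
  apply Finset.measurable_sum
  intro i hi
  have : i ≤ t := by
    have := Finset.mem_range.mp hi; omega
  exact (chiF_meas hR ℱ hx i).mono (ℱ.mono this) le_rfl

include hR hx hb hu hS0 hSstep in
lemma rF_meas : ∀ t, ∀ j < k, Measurable[ℱ t] (rF R S j t) := by
  intro t
  induction t with
  | zero =>
    intro j _
    have : rF R S j 0 = fun _ => (0:ℝ) := by
      funext ω; simp [rF, hS0 ω, wF]
    rw [this]; exact measurable_const
  | succ i ih =>
    intro j hj
    by_cases hik : i < k
    · have : rF R S j (i+1) = fun ω =>
        if j < i then rF R S j i ω else if j = i then chiF R x i ω else 0 := by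
        funext ω; exact rF_step_lt hS0 hSstep i hik j ω
      rw [this]
      by_cases h1 : j < i
      · simp only [if_pos h1]
        exact (ih j hj).mono (ℱ.mono (by omega)) le_rfl
      · simp only [if_neg h1]
        by_cases h2 : j = i
        · simp only [if_pos h2]
          exact (chiF_meas hR ℱ hx i).mono (ℱ.mono (by omega)) le_rfl
        · simp only [if_neg h2]; exact measurable_const
    · have : rF R S j (i+1) = fun ω =>
        if b i ω = true ∧ u i ω = j then chiF R x i ω else rF R S j i ω := by
        funext ω; exact rF_step_ge hS0 hSstep i (by omega) j hj ω
      rw [this]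
      have hset : MeasurableSet[ℱ (i+1)] {ω | b i ω = true ∧ u i ω = j} := by
        have h1 : MeasurableSet[ℱ (i+1)] {ω | b i ω = true} :=
          (hb i) (MeasurableSet.singleton true)
        have h2 : MeasurableSet[ℱ (i+1)] {ω | u i ω = j} :=
          (hu i) (MeasurableSet.singleton j)
        exact h1.inter h2
      exact Measurable.ite hset
        ((chiF_meas hR ℱ hx i).mono (ℱ.mono (by omega)) le_rfl)
        ((ih j hj).mono (ℱ.mono (by omega)) le_rfl)

include hR hx hb hu hS0 hSstep in
lemma CF_meas (t : ℕ) : Measurable[ℱ t] (CF R S k t) :=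
  Finset.measurable_sum _ (fun j hj =>
    rF_meas hR ℱ hx hb hu hS0 hSstep t j (Finset.mem_range.mp hj))

include hR hx hb hu hS0 hSstep in
lemma ZF_meas (t : ℕ) : Measurable[ℱ t] (ZF R x S k t) :=
  ((CF_meas hR ℱ hx hb hu hS0 hSstep t).const_mul _).sub
    ((AF_meas hR ℱ hx t).const_mul _)

lemma CF_bounds (t ω) : 0 ≤ CF R S k t ω ∧ CF R S k t ω ≤ k := by
  constructor
  · exact Finset.sum_nonneg (fun j _ => wF_nonneg R _)
  · calc CF R S k t ω ≤ ∑ _j ∈ Finset.range k, (1:ℝ) :=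
        Finset.sum_le_sum (fun j _ => wF_le_one R _)
    _ = k := by simp

lemma AF_bounds (t : ℕ) (ω : Ω) : 0 ≤ AF R x t ω ∧ AF R x t ω ≤ t := by
  constructor
  · exact Finset.sum_nonneg (fun i _ => by unfold chiF; positivity)
  · have h1 : AF R x t ω ≤ ∑ _i ∈ Finset.range t, (1:ℝ) := by
      apply Finset.sum_le_sum; intro i _
      unfold chiF
      split <;> norm_num
    simpa using h1

include hS0 hSstep in
lemma ZF_k_eq_zero (hkk : True) (ω : Ω) : ZF R x S k k ω = 0 := by
  have hfull := S_full hS0 hSstep k le_rfl ω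
  have hC : CF R S k k ω = AF R x k ω := by
    unfold CF AF
    apply Finset.sum_congr rfl
    intro j hj
    have hjk := Finset.mem_range.mp hj
    simp only [rF, hfull, List.getElem?_map, List.getElem?_range hjk]
    simp [wF, chiF]
  simp [ZF, hC]

end RS2


lemma phiR_bound_aux {θ s nn : ℝ} (hθ : θ ≠ 0) (hs0 : 0 < s) (hsn : s ≤ nn)
    {q : ℝ} (hq0 : 0 ≤ q) {kk : ℝ} (hqk : q * s ≤ kk) {v : ℝ} (hv : |v| = |θ| * s) :
    q * phiR v ≤ kk * s * (phiR (|θ| * nn) / nn ^ 2) := by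
  have hθ0 : 0 < |θ| := abs_pos.mpr hθ
  have hn0 : 0 < nn := lt_of_lt_of_le hs0 hsn
  have hb : 0 < |θ| * nn := by positivity
  have hvb : |v| ≤ |θ| * nn := by rw [hv]; exact mul_le_mul_of_nonneg_left hsn (le_of_lt hθ0)
  have h1 : phiR v ≤ (s / nn) ^ 2 * phiR (|θ| * nn) := by
    have := phiR_le_scale hb hvb
    have e : |v| / (|θ| * nn) = s / nn := by
      rw [hv]; field_simp
    rwa [e] at this
  have hphin : 0 ≤ phiR (|θ| * nn) := phiR_nonneg _
  have h2 : q * phiR v ≤ q * ((s / nn) ^ 2 * phiR (|θ| * nn)) :=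
    mul_le_mul_of_nonneg_left h1 hq0
  have h3 : q * ((s / nn) ^ 2 * phiR (|θ| * nn)) ≤ (kk / s) * ((s / nn) ^ 2 * phiR (|θ| * nn)) := by
    apply mul_le_mul_of_nonneg_right _ (by positivity)
    rw [le_div_iff₀ hs0]; linarith
  have h4 : (kk / s) * ((s / nn) ^ 2 * phiR (|θ| * nn)) = kk * s * (phiR (|θ| * nn) / nn ^ 2) := by
    field_simp
  linarith [h2, h3, h4.le, h4.ge]

lemma bracket_le {kk : ℕ} (hk1 : 1 ≤ kk) {s nn : ℝ} (hs : (kk:ℝ) + 1 ≤ s) (hsn : s ≤ nn)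
    {θ : ℝ} (hθ : θ ≠ 0) (ρ : ℕ → ℝ) (hρ : ∀ j, ρ j = 0 ∨ ρ j = 1)
    {χ : ℝ} (hχ : χ = 0 ∨ χ = 1) {c : ℝ} (hc : c = ∑ j ∈ Finset.range kk, ρ j) :
    (∑ j ∈ Finset.range kk, Real.exp (θ * (c + s * (χ - ρ j) - kk * χ))) / s
      + (1 - kk / s) * Real.exp (θ * (c - kk * χ))
      ≤ Real.exp ((kk : ℝ) * s * (phiR (|θ| * nn) / nn ^ 2)) := by
  have hs0 : 0 < s := by
    have : (0:ℝ) < (kk:ℝ) + 1 := by positivity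
    linarith
  have hc0 : 0 ≤ c := by
    rw [hc]; exact Finset.sum_nonneg (fun j _ => by rcases hρ j with h|h <;> rw [h] <;> norm_num)
  have hck : c ≤ kk := by
    rw [hc]
    calc ∑ j ∈ Finset.range kk, ρ j ≤ ∑ _j ∈ Finset.range kk, (1:ℝ) :=
        Finset.sum_le_sum (fun j _ => by rcases hρ j with h|h <;> rw [h] <;> norm_num)
    _ = kk := by simp
  set E1 := Real.exp (θ * (s * (χ - 1))) with hE1
  set E2 := Real.exp (θ * (s * χ)) with hE2
  have hsum : (∑ j ∈ Finset.range kk, Real.exp (θ * (c + s * (χ - ρ j) - kk * χ)))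
      = Real.exp (θ * (c - kk * χ)) * (c * E1 + ((kk:ℝ) - c) * E2) := by
    have hterm : ∀ j ∈ Finset.range kk,
        Real.exp (θ * (c + s * (χ - ρ j) - kk * χ))
          = Real.exp (θ * (c - kk * χ)) * (ρ j * E1 + (1 - ρ j) * E2) := by
      intro j _
      rcases hρ j with h|h
      · rw [h, hE2]
        have e : (0:ℝ) * E1 + (1 - 0) * Real.exp (θ * (s * χ)) = Real.exp (θ * (s * χ)) := by
          ring
        rw [e, ← Real.exp_add]
        congr 1; ring
      · rw [h, hE1]
        have e : (1:ℝ) * Real.exp (θ * (s * (χ - 1))) + (1 - 1) * E2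
            = Real.exp (θ * (s * (χ - 1))) := by ring
        rw [e, ← Real.exp_add]
        congr 1; ring
    rw [Finset.sum_congr rfl hterm, ← Finset.mul_sum]
    congr 1
    rw [Finset.sum_add_distrib, ← Finset.sum_mul, ← hc, ← Finset.sum_mul]
    have : ∑ j ∈ Finset.range kk, (1 - ρ j) = (kk:ℝ) - c := by
      rw [Finset.sum_sub_distrib, ← hc]; simp
    rw [this]
  rw [hsum]
  rcases hχ with h0 | h1
  · -- χ = 0 : E1 = exp(-θ s), E2 = 1
    subst h0
    have hE2' : E2 = 1 := by rw [hE2]; norm_num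
    have hq0 : 0 ≤ c / s := by positivity
    have key := mgf_two_point (-θ) s (c / s)
    have h1 : -(-θ * (c / s * s)) = θ * (c - (kk:ℝ) * 0) := by
      field_simp
      ring
    rw [h1] at key
    have h2 : θ * (s * (0 - 1)) = -θ * s := by ring
    have heq : Real.exp (θ * (c - (kk:ℝ) * 0)) * (c * E1 + ((kk:ℝ) - c) * E2) / s
        + (1 - (kk:ℝ) / s) * Real.exp (θ * (c - (kk:ℝ) * 0))
        = Real.exp (θ * (c - (kk:ℝ) * 0)) * (1 + c / s * (Real.exp (-θ * s) - 1)) := by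
      rw [hE2', hE1, h2]
      field_simp
      ring
    rw [heq]
    refine key.trans (Real.exp_le_exp.mpr ?_)
    apply phiR_bound_aux hθ hs0 hsn hq0 (by rw [div_mul_cancel₀ _ hs0.ne']; linarith)
    rw [abs_mul, abs_neg, abs_of_pos hs0]
  · -- χ = 1 : E1 = 1, E2 = exp(θ s)
    subst h1
    have hE1' : E1 = 1 := by rw [hE1]; norm_num
    have hq0 : 0 ≤ ((kk:ℝ) - c) / s := by
      apply div_nonneg _ (le_of_lt hs0); linarith
    have key := mgf_two_point θ s (((kk:ℝ) - c) / s)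
    have h1 : -(θ * (((kk:ℝ) - c) / s * s)) = θ * (c - (kk:ℝ) * 1) := by
      field_simp
      ring
    rw [h1] at key
    have heq : Real.exp (θ * (c - (kk:ℝ) * 1)) * (c * E1 + ((kk:ℝ) - c) * E2) / s
        + (1 - (kk:ℝ) / s) * Real.exp (θ * (c - (kk:ℝ) * 1))
        = Real.exp (θ * (c - (kk:ℝ) * 1)) * (1 + ((kk:ℝ) - c) / s * (Real.exp (θ * s) - 1)) := by
      rw [hE1', hE2]
      have h3 : θ * (s * 1) = θ * s := by ring
      rw [h3]
      field_simp
      ring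
    rw [heq]
    refine key.trans (Real.exp_le_exp.mpr ?_)
    apply phiR_bound_aux hθ hs0 hsn hq0 (by rw [div_mul_cancel₀ _ hs0.ne']; linarith)
    rw [abs_mul, abs_of_pos hs0]


section RS3
variable {Ω : Type*} {m0 : MeasurableSpace Ω} {μ : Measure Ω} [IsProbabilityMeasure μ]

lemma int_of_bdd {f : Ω → ℝ} (hf : AEStronglyMeasurable f μ) (C : ℝ)
    (h : ∀ ω, |f ω| ≤ C) : Integrable f μ :=
  (integrable_const C).mono' hf (Filter.Eventually.of_forall
    (by simpa [Real.norm_eq_abs] using h))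

variable {α : Type*} [MeasurableSpace α]
  {R : Set α} {k : ℕ} {x : ℕ → Ω → α} {b : ℕ → Ω → Bool} {u : ℕ → Ω → ℕ}
  {S : ℕ → Ω → List α}

lemma ZF_abs_le (t : ℕ) (ω : Ω) : |ZF R x S k t ω| ≤ 2 * k * t := by
  obtain ⟨hC0, hCk⟩ := CF_bounds (R := R) (S := S) (k := k) t ω
  obtain ⟨hA0, hAt⟩ := AF_bounds (R := R) (x := x) t ω
  rw [ZF, abs_sub_le_iff]
  constructor <;> nlinarith [Nat.cast_nonneg (α := ℝ) t, Nat.cast_nonneg (α := ℝ) k]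

section Step
variable (hult : ∀ i ω, u i ω < k)
  (hS0 : ∀ ω, S 0 ω = [])
  (hSstep : ∀ i ω, S (i + 1) ω =
      if i < k then S i ω ++ [x i ω]
      else if b i ω then (S i ω).set (u i ω) (x i ω)
      else S i ω)

include hult hS0 hSstep in
lemma exp_step_identity (θ : ℝ) (i : ℕ) (hik : k ≤ i) (ω : Ω) :
    Real.exp (θ * ZF R x S k (i + 1) ω)
      = (∑ j ∈ Finset.range k,
          (if b i ω = true ∧ u i ω = j then (1:ℝ) else 0) *
            (Real.exp (θ * (ZF R x S k i ω +
                (CF R S k i ω + ((i:ℝ) + 1) * (chiF R x i ω - rF R S j i ω)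
                  - k * chiF R x i ω)))
              - Real.exp (θ * (ZF R x S k i ω + (CF R S k i ω - k * chiF R x i ω)))))
        + Real.exp (θ * (ZF R x S k i ω + (CF R S k i ω - k * chiF R x i ω))) := by
  have hA : AF R x (i+1) ω = AF R x i ω + chiF R x i ω := Finset.sum_range_succ _ _
  by_cases hbω : b i ω
  · set j0 := u i ω with hj0def
    have hj0 : j0 < k := hult i ω
    have hC : CF R S k (i+1) ω = CF R S k i ω + chiF R x i ω - rF R S j0 i ω := by
      unfold CF
      have hterm : ∀ j ∈ Finset.range k,
          rF R S j (i+1) ω = rF R S j i ω + (if j0 = j then chiF R x i ω - rF R S j i ω else 0) := by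
        intro j hj
        rw [rF_step_ge hS0 hSstep i hik j (Finset.mem_range.mp hj) ω]
        by_cases h : j0 = j
        · subst h
          rw [if_pos ⟨hbω, rfl⟩, if_pos rfl]
          ring
        · rw [if_neg (fun hcon => h (hj0def.trans hcon.2)), if_neg h]
          ring
      rw [Finset.sum_congr rfl hterm, Finset.sum_add_distrib, Finset.sum_ite_eq,
        if_pos (Finset.mem_range.mpr hj0)]
      ring
    have hsum : (∑ j ∈ Finset.range k,
          (if b i ω = true ∧ u i ω = j then (1:ℝ) else 0) *
            (Real.exp (θ * (ZF R x S k i ω +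
                (CF R S k i ω + ((i:ℝ) + 1) * (chiF R x i ω - rF R S j i ω)
                  - k * chiF R x i ω)))
              - Real.exp (θ * (ZF R x S k i ω + (CF R S k i ω - k * chiF R x i ω)))))
        = Real.exp (θ * (ZF R x S k i ω +
                (CF R S k i ω + ((i:ℝ) + 1) * (chiF R x i ω - rF R S j0 i ω)
                  - k * chiF R x i ω)))
              - Real.exp (θ * (ZF R x S k i ω + (CF R S k i ω - k * chiF R x i ω))) := by
      have hterm : ∀ j ∈ Finset.range k,
          (if b i ω = true ∧ u i ω = j then (1:ℝ) else 0) *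
            (Real.exp (θ * (ZF R x S k i ω +
                (CF R S k i ω + ((i:ℝ) + 1) * (chiF R x i ω - rF R S j i ω)
                  - k * chiF R x i ω)))
              - Real.exp (θ * (ZF R x S k i ω + (CF R S k i ω - k * chiF R x i ω))))
          = (if j0 = j then
              (Real.exp (θ * (ZF R x S k i ω +
                (CF R S k i ω + ((i:ℝ) + 1) * (chiF R x i ω - rF R S j i ω)
                  - k * chiF R x i ω)))
              - Real.exp (θ * (ZF R x S k i ω + (CF R S k i ω - k * chiF R x i ω)))) else 0) := by
        intro j hj
        by_cases h : j0 = j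
        · subst h
          rw [if_pos ⟨hbω, rfl⟩, if_pos rfl, one_mul]
        · rw [if_neg (fun hcon => h (hj0def.trans hcon.2)), if_neg h, zero_mul]
      rw [Finset.sum_congr rfl hterm, Finset.sum_ite_eq, if_pos (Finset.mem_range.mpr hj0)]
    rw [hsum]
    have : θ * ZF R x S k (i+1) ω = θ * (ZF R x S k i ω +
        (CF R S k i ω + ((i:ℝ) + 1) * (chiF R x i ω - rF R S j0 i ω) - k * chiF R x i ω)) := by
      unfold ZF
      rw [hA, hC]
      push_cast
      ring
    rw [this]
    ring
  · have hC : CF R S k (i+1) ω = CF R S k i ω := by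
      unfold CF
      apply Finset.sum_congr rfl
      intro j hj
      rw [rF_step_ge hS0 hSstep i hik j (Finset.mem_range.mp hj) ω]
      rw [if_neg (fun hcon => hbω hcon.1)]
    have hzero : ∀ j ∈ Finset.range k,
        (if b i ω = true ∧ u i ω = j then (1:ℝ) else 0) = 0 := by
      intro j _
      rw [if_neg (fun hcon => hbω hcon.1)]
    rw [Finset.sum_congr rfl (fun j hj => by rw [hzero j hj, zero_mul]), Finset.sum_const,
      smul_zero, zero_add]
    have : θ * ZF R x S k (i+1) ω = θ * (ZF R x S k i ω + (CF R S k i ω - k * chiF R x i ω)) := by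
      unfold ZF
      rw [hA, hC]
      push_cast
      ring
    rw [this]
end Step
end RS3


section RS4
variable {Ω : Type*} {m0 : MeasurableSpace Ω} {μ : Measure Ω} [IsProbabilityMeasure μ]
  {α : Type*} [MeasurableSpace α]
  {R : Set α} {k : ℕ} {x : ℕ → Ω → α} {b : ℕ → Ω → Bool} {u : ℕ → Ω → ℕ}
  {S : ℕ → Ω → List α}
  (ℱ : Filtration ℕ m0)
  (hR : MeasurableSet R)
  (hx : ∀ i, Measurable[ℱ i] (x i))
  (hb : ∀ i, Measurable[ℱ (i + 1)] (b i))
  (hu : ∀ i, Measurable[ℱ (i + 1)] (u i))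
  (hult : ∀ i ω, u i ω < k)
  (hS0 : ∀ ω, S 0 ω = [])
  (hSstep : ∀ i ω, S (i + 1) ω =
      if i < k then S i ω ++ [x i ω]
      else if b i ω then (S i ω).set (u i ω) (x i ω)
      else S i ω)

lemma chiF_bounds (i : ℕ) (ω : Ω) : 0 ≤ chiF R x i ω ∧ chiF R x i ω ≤ 1 := by
  unfold chiF; split <;> norm_num

lemma rF_bounds (j t : ℕ) (ω : Ω) : 0 ≤ rF R S j t ω ∧ rF R S j t ω ≤ 1 :=
  ⟨wF_nonneg R _, wF_le_one R _⟩

include ℱ hR hx hb hu hult hS0 hSstep in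
lemma condexp_step (θ : ℝ) (hθ : θ ≠ 0) (nn : ℕ) (hk1 : 1 ≤ k)
    (i : ℕ) (hik : k ≤ i) (hin : i < nn)
    (hunifi : ∀ j < k,
      μ[(fun ω => if b i ω = true ∧ u i ω = j then (1 : ℝ) else 0) | ℱ i]
        =ᵐ[μ] fun _ => 1 / ((i : ℝ) + 1)) :
    μ[fun ω => Real.exp (θ * ZF R x S k (i + 1) ω)|ℱ i] ≤ᵐ[μ]
      fun ω => Real.exp (θ * ZF R x S k i ω) *
        Real.exp ((k : ℝ) * ((i : ℝ) + 1) * (phiR (|θ| * (nn : ℝ)) / (nn : ℝ) ^ 2)) := by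
  haveI : IsFiniteMeasure (μ.trim (ℱ.le i)) := isFiniteMeasure_trim _
  set s : ℝ := (i : ℝ) + 1 with hs_def
  have hs0 : (0:ℝ) < s := by positivity
  -- abbreviations
  set G0 : Ω → ℝ := fun ω =>
    Real.exp (θ * (ZF R x S k i ω + (CF R S k i ω - k * chiF R x i ω))) with hG0
  set G : ℕ → Ω → ℝ := fun j ω =>
    Real.exp (θ * (ZF R x S k i ω +
      (CF R S k i ω + s * (chiF R x i ω - rF R S j i ω) - k * chiF R x i ω))) with hG
  set I : ℕ → Ω → ℝ := fun j ω => if b i ω = true ∧ u i ω = j then 1 else 0 with hI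
  -- identity
  have hid : (fun ω => Real.exp (θ * ZF R x S k (i + 1) ω))
      = (∑ j ∈ Finset.range k, fun ω => (G j ω - G0 ω) * I j ω) + G0 := by
    funext ω
    have := exp_step_identity (R := R) hult hS0 hSstep θ i hik ω
    rw [this]
    rw [Pi.add_apply, Finset.sum_apply]
    congr 1
    apply Finset.sum_congr rfl
    intro j _
    rw [mul_comm]
  -- boundedness and measurability facts
  have hZmZ : Measurable[m0] (ZF R x S k i) :=
    (ZF_meas hR ℱ hx hb hu hS0 hSstep i).mono (ℱ.le i) le_rfl
  have hchiZ : Measurable[m0] (chiF R x i) :=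
    (chiF_meas hR ℱ hx i).mono (ℱ.le i) le_rfl
  have hCZ : Measurable[m0] (CF R S k i) :=
    (CF_meas hR ℱ hx hb hu hS0 hSstep i).mono (ℱ.le i) le_rfl
  have hrZ : ∀ j, j < k → Measurable[m0] (rF R S j i) := fun j hj =>
    (rF_meas hR ℱ hx hb hu hS0 hSstep i j hj).mono (ℱ.le i) le_rfl
  have hZmF : Measurable[ℱ i] (ZF R x S k i) := ZF_meas hR ℱ hx hb hu hS0 hSstep i
  have hchiF' : Measurable[ℱ i] (chiF R x i) := chiF_meas hR ℱ hx i
  have hCF' : Measurable[ℱ i] (CF R S k i) := CF_meas hR ℱ hx hb hu hS0 hSstep i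
  have hrF' : ∀ j, j < k → Measurable[ℱ i] (rF R S j i) := fun j hj =>
    rF_meas hR ℱ hx hb hu hS0 hSstep i j hj
  have hG0measF : Measurable[ℱ i] G0 := by
    apply Measurable.exp
    exact ((hZmF.add (hCF'.sub (hchiF'.const_mul _))).const_mul θ)
  have hGmeasF : ∀ j, j < k → Measurable[ℱ i] (G j) := by
    intro j hj
    apply Measurable.exp
    apply Measurable.const_mul
    apply hZmF.add
    exact ((hCF'.add (((hchiF'.sub (hrF' j hj)).const_mul s))).sub (hchiF'.const_mul _))
  have hImeas : ∀ j, Measurable[m0] (I j) := by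
    intro j
    have h1 : MeasurableSet[ℱ (i+1)] {ω | b i ω = true ∧ u i ω = j} :=
      ((hb i) (MeasurableSet.singleton true)).inter ((hu i) (MeasurableSet.singleton j))
    exact Measurable.ite (ℱ.le (i+1) _ h1) measurable_const measurable_const
  -- bounds
  set M0 : ℝ := 2 * k * i + 2 * k + s with hM0
  set CB : ℝ := Real.exp (|θ| * M0) with hCB
  have hargbound : ∀ (y : ℝ), |y| ≤ M0 → Real.exp (θ * y) ≤ CB := by
    intro y hy
    rw [hCB]
    apply Real.exp_le_exp.mpr
    calc θ * y ≤ |θ * y| := le_abs_self _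
    _ = |θ| * |y| := abs_mul _ _
    _ ≤ |θ| * M0 := mul_le_mul_of_nonneg_left hy (abs_nonneg θ)
  have hG0b : ∀ ω, |G0 ω| ≤ CB := by
    intro ω
    simp only [hG0]
    rw [abs_of_pos (Real.exp_pos _)]
    apply hargbound
    obtain ⟨hC0, hCk⟩ := CF_bounds (R := R) (S := S) (k := k) i ω
    obtain ⟨hx0, hx1⟩ := chiF_bounds (R := R) (x := x) i ω
    have hZ := ZF_abs_le (R := R) (x := x) (S := S) (k := k) i ω
    rw [hM0, abs_le]
    rw [abs_le] at hZ
    have hk0 : (0:ℝ) ≤ (k:ℝ) := Nat.cast_nonneg k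
    constructor <;> nlinarith [hs0]
  have hGb : ∀ j ω, |G j ω| ≤ CB := by
    intro j ω
    simp only [hG]
    rw [abs_of_pos (Real.exp_pos _)]
    apply hargbound
    obtain ⟨hC0, hCk⟩ := CF_bounds (R := R) (S := S) (k := k) i ω
    obtain ⟨hx0, hx1⟩ := chiF_bounds (R := R) (x := x) i ω
    obtain ⟨hr0, hr1⟩ := rF_bounds (R := R) (S := S) j i ω
    have hZ := ZF_abs_le (R := R) (x := x) (S := S) (k := k) i ω
    rw [hM0, abs_le]
    rw [abs_le] at hZ
    have hk0 : (0:ℝ) ≤ (k:ℝ) := Nat.cast_nonneg k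
    constructor <;> nlinarith [hs0]
  have hIb : ∀ j ω, |I j ω| ≤ 1 := by
    intro j ω
    simp only [hI]
    split <;> norm_num
  -- integrability
  have hG0int : Integrable G0 μ :=
    int_of_bdd ((hG0measF.mono (ℱ.le i) le_rfl).aestronglyMeasurable) CB hG0b
  have hGint : ∀ j, j < k → Integrable (G j) μ := fun j hj =>
    int_of_bdd (((hGmeasF j hj).mono (ℱ.le i) le_rfl).aestronglyMeasurable) CB (hGb j)
  have hIint : ∀ j, Integrable (I j) μ := fun j =>
    int_of_bdd ((hImeas j).aestronglyMeasurable) 1 (hIb j)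
  have hfjint : ∀ j, j < k → Integrable (fun ω => (G j ω - G0 ω) * I j ω) μ := by
    intro j hj
    apply int_of_bdd
    · exact ((((hGmeasF j hj).mono (ℱ.le i) le_rfl).sub
        (hG0measF.mono (ℱ.le i) le_rfl)).mul (hImeas j)).aestronglyMeasurable
    · intro ω
      rw [abs_mul]
      calc |G j ω - G0 ω| * |I j ω| ≤ (|G j ω| + |G0 ω|) * 1 := by
            apply mul_le_mul (abs_sub _ _) (hIb j ω) (abs_nonneg _)
            positivity
      _ ≤ CB + CB := by
            rw [mul_one]
            exact add_le_add (hGb j ω) (hG0b ω)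
  have hfe : (∑ j ∈ Finset.range k, fun ω => (G j ω - G0 ω) * I j ω)
      = fun a => ∑ j ∈ Finset.range k, (G j a - G0 a) * I j a := by
    funext a
    exact Finset.sum_apply _ _ _
  have hsumint : Integrable (∑ j ∈ Finset.range k, fun ω => (G j ω - G0 ω) * I j ω) μ := by
    rw [hfe]
    exact integrable_finset_sum _ (fun j hj => hfjint j (Finset.mem_range.mp hj))
  -- conditional expectation computation
  have h1 : μ[(∑ j ∈ Finset.range k, fun ω => (G j ω - G0 ω) * I j ω) + G0|ℱ i]
      =ᵐ[μ] μ[∑ j ∈ Finset.range k, fun ω => (G j ω - G0 ω) * I j ω|ℱ i] + μ[G0|ℱ i] :=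
    condExp_add hsumint hG0int _
  have h2 : μ[∑ j ∈ Finset.range k, fun ω => (G j ω - G0 ω) * I j ω|ℱ i]
      =ᵐ[μ] ∑ j ∈ Finset.range k, μ[fun ω => (G j ω - G0 ω) * I j ω|ℱ i] :=
    condExp_finsetSum (fun j hj => hfjint j (Finset.mem_range.mp hj)) _
  have h3 : ∀ j, j < k → μ[fun ω => (G j ω - G0 ω) * I j ω|ℱ i]
      =ᵐ[μ] fun ω => (G j ω - G0 ω) * (1 / s) := by
    intro j hj
    have hsm : StronglyMeasurable[ℱ i] (fun ω => G j ω - G0 ω) :=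
      ((hGmeasF j hj).sub hG0measF).stronglyMeasurable
    have hmul := condExp_mul_of_stronglyMeasurable_left hsm
      (show Integrable ((fun ω => G j ω - G0 ω) * I j) μ from hfjint j hj)
      (hIint j)
    have : μ[fun ω => (G j ω - G0 ω) * I j ω|ℱ i]
        =ᵐ[μ] (fun ω => G j ω - G0 ω) * μ[I j|ℱ i] := hmul
    refine this.trans ?_
    have hu2 := hunifi j hj
    have : μ[I j|ℱ i] =ᵐ[μ] fun _ => 1 / s := hu2
    filter_upwards [this] with ω hω
    rw [Pi.mul_apply, hω]
  have h4 : μ[G0|ℱ i] = G0 :=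
    condExp_of_stronglyMeasurable (ℱ.le i) hG0measF.stronglyMeasurable hG0int
  have hall : ∀ᵐ ω ∂μ, ∀ j : ℕ, j < k →
      (μ[fun ω' => (G j ω' - G0 ω') * I j ω'|ℱ i]) ω = (G j ω - G0 ω) * (1 / s) := by
    rw [MeasureTheory.ae_all_iff]
    intro j
    by_cases hj : j < k
    · exact (h3 j hj).mono (fun ω h _ => h)
    · exact Filter.Eventually.of_forall (fun ω hcon => absurd hcon hj)
  have hcond : μ[(∑ j ∈ Finset.range k, fun ω => (G j ω - G0 ω) * I j ω) + G0|ℱ i]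
      =ᵐ[μ] fun ω => (∑ j ∈ Finset.range k, (G j ω - G0 ω)) * (1 / s) + G0 ω := by
    refine h1.trans ?_
    filter_upwards [h2, hall] with ω hω2 hωall
    rw [Pi.add_apply, hω2, h4, Finset.sum_apply]
    congr 1
    rw [Finset.sum_congr rfl (fun j hj => hωall j (Finset.mem_range.mp hj)), ← Finset.sum_mul]
  -- pointwise bound
  have hpt : ∀ ω, (∑ j ∈ Finset.range k, (G j ω - G0 ω)) * (1 / s) + G0 ω
      ≤ Real.exp (θ * ZF R x S k i ω) *
        Real.exp ((k : ℝ) * s * (phiR (|θ| * (nn : ℝ)) / (nn : ℝ) ^ 2)) := by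
    intro ω
    set X : ℝ := Real.exp (θ * ZF R x S k i ω) with hX
    have hX0 : 0 < X := Real.exp_pos _
    set c : ℝ := CF R S k i ω with hc
    set χ : ℝ := chiF R x i ω with hχ
    have hGsplit : ∀ j, G j ω = X * Real.exp (θ * (c + s * (χ - rF R S j i ω) - k * χ)) := by
      intro j
      simp only [hG]
      rw [hX, ← Real.exp_add]
      congr 1
      ring
    have hG0split : G0 ω = X * Real.exp (θ * (c - k * χ)) := by
      simp only [hG0]
      rw [hX, ← Real.exp_add]
      congr 1
      ring
    have hLHS : (∑ j ∈ Finset.range k, (G j ω - G0 ω)) * (1 / s) + G0 ω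
        = X * ((∑ j ∈ Finset.range k,
            Real.exp (θ * (c + s * (χ - rF R S j i ω) - k * χ))) / s
          + (1 - k / s) * Real.exp (θ * (c - k * χ))) := by
      rw [Finset.sum_congr rfl (fun j _ => by rw [hGsplit j, hG0split]),
        Finset.sum_sub_distrib, ← Finset.mul_sum, Finset.sum_const, Finset.card_range,
        hG0split, nsmul_eq_mul]
      field_simp
      ring
    rw [hLHS]
    have hbrk := bracket_le hk1
      (show (k:ℝ) + 1 ≤ s by
        rw [hs_def]
        have : (k:ℝ) ≤ (i:ℝ) := Nat.cast_le.mpr hik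
        linarith)
      (show s ≤ (nn:ℝ) by
        rw [hs_def]
        have : (i:ℝ) + 1 ≤ (nn:ℝ) := by exact_mod_cast Nat.succ_le_of_lt hin
        linarith)
      hθ (fun j => rF R S j i ω)
      (fun j => by
        rcases wF_mem R ((S i ω)[j]?) with h|h
        · left; exact h
        · right; exact h)
      (show χ = 0 ∨ χ = 1 by
        rw [hχ]; unfold chiF; split
        · right; rfl
        · left; rfl)
      (show c = ∑ j ∈ Finset.range k, rF R S j i ω from rfl)
    calc X * _ ≤ X * Real.exp ((k : ℝ) * s * (phiR (|θ| * (nn : ℝ)) / (nn : ℝ) ^ 2)) :=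
          mul_le_mul_of_nonneg_left hbrk (le_of_lt hX0)
    _ = _ := rfl
  -- conclude
  rw [hid]
  filter_upwards [hcond] with ω hω
  rw [hω]
  exact hpt ω
end RS4


section RS5
variable {Ω : Type*} {m0 : MeasurableSpace Ω} {μ : Measure Ω} [IsProbabilityMeasure μ]
  {α : Type*} [MeasurableSpace α]
  {R : Set α} {k : ℕ} {x : ℕ → Ω → α} {b : ℕ → Ω → Bool} {u : ℕ → Ω → ℕ}
  {S : ℕ → Ω → List α}
  (ℱ : Filtration ℕ m0)
  (hR : MeasurableSet R)
  (hx : ∀ i, Measurable[ℱ i] (x i))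
  (hb : ∀ i, Measurable[ℱ (i + 1)] (b i))
  (hu : ∀ i, Measurable[ℱ (i + 1)] (u i))
  (hult : ∀ i ω, u i ω < k)
  (hS0 : ∀ ω, S 0 ω = [])
  (hSstep : ∀ i ω, S (i + 1) ω =
      if i < k then S i ω ++ [x i ω]
      else if b i ω then (S i ω).set (u i ω) (x i ω)
      else S i ω)

include ℱ hR hx hb hu hS0 hSstep in
lemma exp_ZF_int (θ : ℝ) (t : ℕ) :
    Integrable (fun ω => Real.exp (θ * ZF R x S k t ω)) μ := by
  apply int_of_bdd
  · apply Measurable.aestronglyMeasurable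
    exact (((ZF_meas hR ℱ hx hb hu hS0 hSstep t).mono (ℱ.le t) le_rfl).const_mul θ).exp
  · intro ω
    rw [abs_of_pos (Real.exp_pos _)]
    apply Real.exp_le_exp.mpr
    calc θ * ZF R x S k t ω ≤ |θ * ZF R x S k t ω| := le_abs_self _
    _ = |θ| * |ZF R x S k t ω| := abs_mul _ _
    _ ≤ |θ| * (2 * k * t) := mul_le_mul_of_nonneg_left (ZF_abs_le t ω) (abs_nonneg θ)

include ℱ hR hx hb hu hult hS0 hSstep in
lemma integral_exp_le (θ : ℝ) (hθ : θ ≠ 0) (nn : ℕ) (hk1 : 1 ≤ k)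
    (hunif : ∀ i, k ≤ i → ∀ j < k,
      μ[((fun ω => if b i ω = true ∧ u i ω = j then (1 : ℝ) else 0)) | ℱ i]
        =ᵐ[μ] fun _ => 1 / ((i : ℝ) + 1)) :
    ∀ t, k ≤ t → t ≤ nn →
      ∫ ω, Real.exp (θ * ZF R x S k t ω) ∂μ
        ≤ Real.exp ((k : ℝ) * (phiR (|θ| * (nn : ℝ)) / (nn : ℝ) ^ 2) *
            (∑ s0 ∈ Finset.Ico k t, ((s0 : ℝ) + 1))) := by
  intro t htk
  induction t, htk using Nat.le_induction with
  | base =>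
    intro _
    have hz : ∀ ω, Real.exp (θ * ZF R x S k k ω) = 1 := by
      intro ω
      rw [ZF_k_eq_zero hS0 hSstep trivial ω, mul_zero, Real.exp_zero]
    rw [show (fun ω => Real.exp (θ * ZF R x S k k ω)) = fun _ => (1:ℝ) from funext hz]
    simp
  | succ t hkt ih =>
    intro htn
    have htn' : t ≤ nn := by omega
    have htnlt : t < nn := by omega
    have hint1 := exp_ZF_int ℱ hR hx hb hu hS0 hSstep (μ := μ) θ (t+1)
    have hint0 := exp_ZF_int ℱ hR hx hb hu hS0 hSstep (μ := μ) θ t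
    haveI : IsFiniteMeasure (μ.trim (ℱ.le t)) := isFiniteMeasure_trim _
    set K : ℝ := Real.exp ((k : ℝ) * ((t : ℝ) + 1) * (phiR (|θ| * (nn : ℝ)) / (nn : ℝ) ^ 2))
      with hK
    have step := condexp_step ℱ hR hx hb hu hult hS0 hSstep θ hθ nn hk1 t hkt htnlt
      (fun j hj => hunif t hkt j hj)
    calc ∫ ω, Real.exp (θ * ZF R x S k (t+1) ω) ∂μ
        = ∫ ω, (μ[fun ω' => Real.exp (θ * ZF R x S k (t+1) ω')|ℱ t]) ω ∂μ :=
          (integral_condExp (ℱ.le t)).symm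
      _ ≤ ∫ ω, Real.exp (θ * ZF R x S k t ω) * K ∂μ := by
          apply integral_mono_ae integrable_condExp (hint0.mul_const K) step
      _ = (∫ ω, Real.exp (θ * ZF R x S k t ω) ∂μ) * K := integral_mul_const K _
      _ ≤ Real.exp ((k : ℝ) * (phiR (|θ| * (nn : ℝ)) / (nn : ℝ) ^ 2) *
            (∑ s0 ∈ Finset.Ico k t, ((s0 : ℝ) + 1))) * K := by
          apply mul_le_mul_of_nonneg_right (ih htn') (by rw [hK]; positivity)
      _ = _ := by
          rw [hK, ← Real.exp_add]
          congr 1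
          rw [Finset.sum_Ico_succ_top hkt]
          ring

lemma markov_tail (θ lam : ℝ) (hθ : 0 < θ) (f : Ω → ℝ)
    (hfint : Integrable (fun ω => Real.exp (θ * f ω)) μ) (BB : ℝ)
    (hB : ∫ ω, Real.exp (θ * f ω) ∂μ ≤ BB) :
    μ {ω | lam ≤ f ω} ≤ ENNReal.ofReal (BB / Real.exp (θ * lam)) := by
  have hsub : {ω | lam ≤ f ω} ⊆ {ω | Real.exp (θ * lam) ≤ Real.exp (θ * f ω)} := by
    intro ω hω
    simp only [Set.mem_setOf_eq] at *
    exact Real.exp_le_exp.mpr (mul_le_mul_of_nonneg_left hω (le_of_lt hθ))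
  have hmark := mul_meas_ge_le_integral_of_nonneg
    (Filter.Eventually.of_forall (fun ω => Real.exp_nonneg _)) hfint (Real.exp (θ * lam))
  have hepos : 0 < Real.exp (θ * lam) := Real.exp_pos _
  have h2 : (μ {ω | Real.exp (θ * lam) ≤ Real.exp (θ * f ω)}).toReal
      ≤ BB / Real.exp (θ * lam) := by
    rw [le_div_iff₀ hepos]
    calc (μ {ω | Real.exp (θ * lam) ≤ Real.exp (θ * f ω)}).toReal * Real.exp (θ * lam)
        = Real.exp (θ * lam) * (μ {ω | Real.exp (θ * lam) ≤ Real.exp (θ * f ω)}).toReal := by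
          ring
      _ ≤ ∫ ω, Real.exp (θ * f ω) ∂μ := hmark
      _ ≤ BB := hB
  calc μ {ω | lam ≤ f ω} ≤ μ {ω | Real.exp (θ * lam) ≤ Real.exp (θ * f ω)} :=
        measure_mono hsub
    _ = ENNReal.ofReal ((μ {ω | Real.exp (θ * lam) ≤ Real.exp (θ * f ω)}).toReal) :=
        (ENNReal.ofReal_toReal (measure_ne_top μ _)).symm
    _ ≤ ENNReal.ofReal (BB / Real.exp (θ * lam)) := ENNReal.ofReal_le_ofReal h2

lemma gauss_sum : ∀ m : ℕ, (∑ s0 ∈ Finset.range m, ((s0 : ℝ) + 1)) = m * (m + 1) / 2 := by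
  intro m
  induction m with
  | zero => simp
  | succ p ih =>
    rw [Finset.sum_range_succ, ih]
    push_cast
    ring
end RS5



lemma freedman_arith {lam V nr : ℝ} (hlam : 0 < lam) (hV : 0 < V) (hn : 0 < nr) :
    V * (((lam / (V + nr * lam / 3)) * nr) ^ 2 /
        (2 * (1 - ((lam / (V + nr * lam / 3)) * nr) / 3))) / nr ^ 2
      - (lam / (V + nr * lam / 3)) * lam
      = -(lam ^ 2 / (2 * (V + nr * lam / 3))) := by
  have hW : 0 < V + nr * lam / 3 := by positivity
  have h13 : 1 - ((lam / (V + nr * lam / 3)) * nr) / 3 = V / (V + nr * lam / 3) := by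
    field_simp
    ring
  rw [h13]
  field_simp
  ring


/-- Reservoir sampling is `(ε, δ)`-robust against adaptive adversaries for a
single set `R`: the reservoir stores the first `k` elements; round `i+1 > k`
stores the adaptively chosen element `x i` with probability `k/(i+1)`, replacing
a uniformly random stored element (so for each slot `j < k`, the event "accepted
and slot `j` evicted" has conditional probability `1/(i+1)` given the history).
If `k ≥ 2·ln(2/δ)/ε²` and `n ≥ 2`, then with probability at least `1 - δ` the
final sample `S n` satisfies `|d_R(X) - d_R(S n)| ≤ ε`. -/
theorem reservoir_sampling_robust
    {Ω : Type*} {m0 : MeasurableSpace Ω} {μ : Measure Ω} [IsProbabilityMeasure μ]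
    {α : Type*} [MeasurableSpace α] (R : Set α) (hR : MeasurableSet R)
    (ℱ : Filtration ℕ m0)
    (n k : ℕ) (hn : 2 ≤ n) (hk : 0 < k)
    (ε δ : ℝ) (hε0 : 0 < ε) (hε1 : ε < 1) (hδ0 : 0 < δ) (hδ1 : δ < 1)
    (hksize : 2 * Real.log (2 / δ) / ε ^ 2 ≤ (k : ℝ))
    (x : ℕ → Ω → α) (b : ℕ → Ω → Bool) (u : ℕ → Ω → ℕ)
    (hx : ∀ i, Measurable[ℱ i] (x i))
    (hb : ∀ i, Measurable[ℱ (i + 1)] (b i))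
    (hu : ∀ i, Measurable[ℱ (i + 1)] (u i))
    (hult : ∀ i ω, u i ω < k)
    (hunif : ∀ i, k ≤ i → ∀ j < k,
      μ[((fun ω => if b i ω = true ∧ u i ω = j then (1 : ℝ) else 0)) | ℱ i]
        =ᵐ[μ] fun _ => 1 / ((i : ℝ) + 1))
    (S : ℕ → Ω → List α)
    (hS0 : ∀ ω, S 0 ω = [])
    (hSstep : ∀ i ω, S (i + 1) ω =
      if i < k then S i ω ++ [x i ω]
      else if b i ω then (S i ω).set (u i ω) (x i ω)
      else S i ω) :
    μ {ω | ε <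
        |((((Finset.range n).filter fun i => x i ω ∈ R).card : ℝ) / n) -
          density (S n ω) R|}
      ≤ ENNReal.ofReal δ := by
  have hn0 : (0:ℝ) < n := by positivity
  have hk0 : (0:ℝ) < k := by exact_mod_cast hk
  have hn2r : (2:ℝ) ≤ n := by exact_mod_cast hn
  have hk1r : (1:ℝ) ≤ k := by exact_mod_cast hk
  have hwo : ∀ o : Option α,
      (Option.elim o (0:ℝ)
        (fun a => if (fun y => @decide (y ∈ R) (Classical.propDecidable _)) a then (1:ℝ) else 0))
        = wF R o := by
    intro o
    cases o with
    | none => rfl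
    | some a =>
      by_cases h : a ∈ R
      · simp [wF, h]
      · simp [wF, h]
  have hacard : ∀ ω, (((Finset.range n).filter fun i => x i ω ∈ R).card : ℝ) = AF R x n ω := by
    intro ω
    rw [Finset.card_filter]
    push_cast
    unfold AF chiF
    apply Finset.sum_congr rfl
    intro i _
    by_cases h : x i ω ∈ R
    · simp [h]
    · simp [h]
  by_cases hnk : n ≤ k
  · -- trivial case : the sample is the whole stream
    have hempty : {ω | ε <
        |((((Finset.range n).filter fun i => x i ω ∈ R).card : ℝ) / n) -
          density (S n ω) R|} = ∅ := by
      ext ω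
      simp only [Set.mem_setOf_eq, Set.mem_empty_iff_false, iff_false, not_lt]
      have hfull := S_full hS0 hSstep n hnk ω
      have hlen : ((S n ω).length : ℝ) = n := by
        rw [S_length hS0 hSstep n ω, min_eq_left hnk]
      have hlen' : (S n ω).length ≤ n := by
        rw [S_length hS0 hSstep n ω]; omega
      have hcount : ((S n ω).countP
            (fun y => @decide (y ∈ R) (Classical.propDecidable _)) : ℝ) = AF R x n ω := by
        rw [countP_eq_sum _ (S n ω) n hlen']
        unfold AF
        apply Finset.sum_congr rfl
        intro j hj
        have hjn := Finset.mem_range.mp hj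
        rw [hwo ((S n ω)[j]?), hfull, List.getElem?_map, List.getElem?_range hjn]
        simp [wF, chiF]
      have hdens : density (S n ω) R = AF R x n ω / n := by
        rw [density, hcount, hlen]
      rw [hdens, hacard ω, sub_self, abs_zero]
      exact le_of_lt hε0
    rw [hempty]
    simp
  · push_neg at hnk
    have hknr : (k:ℝ) < n := by exact_mod_cast hnk
    set lam : ℝ := ε * k * n with hlam_def
    have hlam : 0 < lam := by positivity
    set B : ℝ := ∑ s0 ∈ Finset.Ico k n, ((s0 : ℝ) + 1) with hB_def
    have hBval : B = ((n:ℝ) * ((n:ℝ) + 1) - (k:ℝ) * ((k:ℝ) + 1)) / 2 := by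
      rw [hB_def, Finset.sum_Ico_eq_sub _ (le_of_lt hnk), gauss_sum, gauss_sum]
      ring
    have hBpos : 0 < B := by rw [hBval]; nlinarith
    set V : ℝ := (k:ℝ) * B with hV_def
    have hVpos : 0 < V := by rw [hV_def]; positivity
    set W : ℝ := V + (n:ℝ) * lam / 3 with hW_def
    have hWpos : 0 < W := by rw [hW_def]; positivity
    set θ0 : ℝ := lam / W with hθ0_def
    have hθ0 : 0 < θ0 := by rw [hθ0_def]; positivity
    have hθne : θ0 ≠ 0 := ne_of_gt hθ0
    have habs : |θ0| = θ0 := abs_of_pos hθ0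
    set φc : ℝ := phiR (|θ0| * (n : ℝ)) / (n : ℝ) ^ 2 with hφc_def
    set BB : ℝ := Real.exp ((k : ℝ) * φc * B) with hBB_def
    set ρ : ℝ := BB / Real.exp (θ0 * lam) with hρ_def
    have hρ0 : 0 ≤ ρ := by rw [hρ_def]; positivity
    -- tail bounds
    have hIE1 := integral_exp_le ℱ hR hx hb hu hult hS0 hSstep θ0 hθne n hk
      hunif n (le_of_lt hnk) le_rfl
    have hIE2 := integral_exp_le ℱ hR hx hb hu hult hS0 hSstep (-θ0) (neg_ne_zero.mpr hθne) n hk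
      hunif n (le_of_lt hnk) le_rfl
    rw [abs_neg] at hIE2
    have hT1 : μ {ω | lam ≤ ZF R x S k n ω} ≤ ENNReal.ofReal ρ := by
      rw [hρ_def]
      exact markov_tail θ0 lam hθ0 (ZF R x S k n)
        (exp_ZF_int ℱ hR hx hb hu hS0 hSstep θ0 n) BB hIE1
    have hconv : (fun ω => Real.exp (θ0 * -(ZF R x S k n ω)))
        = (fun ω => Real.exp ((-θ0) * ZF R x S k n ω)) := by
      funext ω; congr 1; ring
    have hT2 : μ {ω | lam ≤ -(ZF R x S k n ω)} ≤ ENNReal.ofReal ρ := by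
      rw [hρ_def]
      apply markov_tail θ0 lam hθ0 (fun ω => -(ZF R x S k n ω)) _ BB
      · rw [hconv]; exact hIE2
      · rw [hconv]; exact exp_ZF_int ℱ hR hx hb hu hS0 hSstep (-θ0) n
    -- event inclusion
    have hsub : {ω | ε <
        |((((Finset.range n).filter fun i => x i ω ∈ R).card : ℝ) / n) -
          density (S n ω) R|}
        ⊆ {ω | lam ≤ ZF R x S k n ω} ∪ {ω | lam ≤ -(ZF R x S k n ω)} := by
      intro ω hω
      simp only [Set.mem_setOf_eq] at hω
      have hlenk : ((S n ω).length : ℝ) = k := by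
        rw [S_length hS0 hSstep n ω, min_eq_right (le_of_lt hnk)]
      have hlenk' : (S n ω).length ≤ k := by
        rw [S_length hS0 hSstep n ω]; omega
      have hcount : ((S n ω).countP
            (fun y => @decide (y ∈ R) (Classical.propDecidable _)) : ℝ) = CF R S k n ω := by
        rw [countP_eq_sum _ (S n ω) k hlenk']
        unfold CF
        apply Finset.sum_congr rfl
        intro j _
        rw [hwo ((S n ω)[j]?)]
        rfl
      have hdens : density (S n ω) R = CF R S k n ω / k := by
        rw [density, hcount, hlenk]
      rw [hdens, hacard ω] at hω
      have hzrel : AF R x n ω / n - CF R S k n ω / k = -(ZF R x S k n ω) / ((k:ℝ) * n) := by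
        unfold ZF
        field_simp
        ring
      rw [hzrel, abs_div, abs_neg, abs_of_pos (by positivity : (0:ℝ) < (k:ℝ) * n)] at hω
      have hlamlt : lam < |ZF R x S k n ω| := by
        rw [hlam_def]
        rw [lt_div_iff₀ (by positivity : (0:ℝ) < (k:ℝ) * n)] at hω
        calc ε * k * n = ε * ((k:ℝ) * n) := by ring
        _ < |ZF R x S k n ω| := hω
      rcases le_or_gt 0 (ZF R x S k n ω) with h | h
      · left
        rw [Set.mem_setOf_eq]
        rw [abs_of_nonneg h] at hlamlt
        linarith
      · right
        rw [Set.mem_setOf_eq]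
        rw [abs_of_neg h] at hlamlt
        linarith
    -- final numeric bound
    set L : ℝ := Real.log (2 / δ) with hL_def
    have hLk : L ≤ (k:ℝ) * ε ^ 2 / 2 := by
      have hε2 : (0:ℝ) < ε ^ 2 := by positivity
      rw [div_le_iff₀ hε2] at hksize
      rw [hL_def]; nlinarith
    set uu : ℝ := θ0 * n with huu_def
    have huu0 : 0 ≤ uu := by rw [huu_def]; positivity
    have huu3 : uu < 3 := by
      rw [huu_def, hθ0_def, div_mul_eq_mul_div, div_lt_iff₀ hWpos]
      rw [hW_def]
      nlinarith
    have hquad := phiR_le_quad huu0 huu3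
    have hexp_arg : (k : ℝ) * φc * B - θ0 * lam ≤ -(lam ^ 2 / (2 * W)) := by
      have h1 : (k : ℝ) * φc * B = V * (phiR uu / (n:ℝ)^2) := by
        rw [hφc_def, habs, hV_def, huu_def]; ring
      have h2 : V * (phiR uu / (n:ℝ)^2) ≤ V * ((uu ^ 2 / (2 * (1 - uu / 3))) / (n:ℝ)^2) := by
        gcongr
      have h3 : V * ((uu ^ 2 / (2 * (1 - uu / 3))) / (n:ℝ)^2) - θ0 * lam
          = -(lam ^ 2 / (2 * W)) := by
        have h := freedman_arith (lam := lam) (V := V) (nr := (n:ℝ)) hlam hVpos hn0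
        rw [huu_def, hθ0_def, hW_def]
        linear_combination h
      rw [h1]
      linarith
    have hLW : L ≤ lam ^ 2 / (2 * W) := by
      have hBn : B + ε * (n:ℝ)^2 / 3 ≤ (n:ℝ)^2 := by
        rw [hBval]
        nlinarith [mul_le_mul_of_nonneg_right hε1.le (sq_nonneg (n:ℝ)),
          mul_nonneg (sub_nonneg.mpr hn2r) (by linarith : (0:ℝ) ≤ (n:ℝ) - 1)]
      have hkey : 2 * L * W ≤ lam ^ 2 := by
        have h6 : (k:ℝ) * ε^2 * W = ε^2 * (k:ℝ)^2 * (B + ε * (n:ℝ)^2 / 3) := by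
          rw [hW_def, hV_def, hlam_def]; ring
        have h7 : (k:ℝ) * ε^2 * W ≤ lam^2 := by
          rw [h6, hlam_def]
          calc ε^2 * (k:ℝ)^2 * (B + ε * (n:ℝ)^2 / 3) ≤ ε^2 * (k:ℝ)^2 * (n:ℝ)^2 := by
                gcongr
          _ = (ε * k * n)^2 := by ring
        nlinarith
      rw [le_div_iff₀ (by positivity : (0:ℝ) < 2 * W)]
      nlinarith
    have hρδ : ρ ≤ δ / 2 := by
      have hρeq : ρ = Real.exp ((k : ℝ) * φc * B - θ0 * lam) := by
        rw [hρ_def, hBB_def, Real.exp_sub]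
      have hexpL : Real.exp (-L) = δ / 2 := by
        rw [hL_def, Real.exp_neg, Real.exp_log (by positivity : (0:ℝ) < 2 / δ), inv_div]
      calc ρ = Real.exp ((k : ℝ) * φc * B - θ0 * lam) := hρeq
        _ ≤ Real.exp (-(lam ^ 2 / (2 * W))) := Real.exp_le_exp.mpr hexp_arg
        _ ≤ Real.exp (-L) := Real.exp_le_exp.mpr (by linarith)
        _ = δ / 2 := hexpL
    calc μ {ω | ε <
        |((((Finset.range n).filter fun i => x i ω ∈ R).card : ℝ) / n) -
          density (S n ω) R|}
        ≤ μ ({ω | lam ≤ ZF R x S k n ω} ∪ {ω | lam ≤ -(ZF R x S k n ω)}) :=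
          measure_mono hsub
      _ ≤ μ {ω | lam ≤ ZF R x S k n ω} + μ {ω | lam ≤ -(ZF R x S k n ω)} :=
          measure_union_le _ _
      _ ≤ ENNReal.ofReal ρ + ENNReal.ofReal ρ := add_le_add hT1 hT2
      _ = ENNReal.ofReal (ρ + ρ) := (ENNReal.ofReal_add hρ0 hρ0).symm
      _ ≤ ENNReal.ofReal δ := ENNReal.ofReal_le_ofReal (by linarith)
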